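/- Let p₀, p₁, ..., pₙ be positive real numbers with p₁ > p₂ > ... > pₙ. Then the sum over i from 1 to n of p_{i-1} / (p₀ + p₁ + ... + pₙ - p_i) is strictly greater than 1. -/

import Mathlib

open Finset in
/-- For positive reals `p 0, …, p n` with `p 1 > p 2 > ⋯ > p n` and `n ≥ 2`,
`∑_{i=1}^n p (i-1) / (p 0 + ⋯ + p n - p i) > 1`. -/
theorem key_inequality (n : ℕ) (hn : 2 ≤ n) (p : ℕ → ℝ)
    (hpos : ∀ i ≤ n, 0 < p i)
    (hanti : ∀ i j, 1 ≤ i → i < j → j ≤ n → p j < p i) :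
    ∑ i ∈ Finset.Icc 1 n, p (i - 1) / ((∑ j ∈ Finset.range (n + 1), p j) - p i) > 1 := by
  set S := ∑ j ∈ Finset.range (n + 1), p j with hSdef
  -- positivity of denominators
  have hS : ∀ i ≤ n, 0 < S - p i := by
    intro i hi
    have hmem : i ∈ Finset.range (n + 1) := Finset.mem_range.2 (by omega)
    have hsum : ∑ j ∈ (Finset.range (n+1)).erase i, p j + p i = S :=
      Finset.sum_erase_add _ _ hmem
    have hne : ((Finset.range (n+1)).erase i).Nonempty := by
      refine ⟨if i = 0 then 1 else 0, Finset.mem_erase.2 ⟨?_, Finset.mem_range.2 ?_⟩⟩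
      · split <;> omega
      · split <;> omega
    have hpos' : 0 < ∑ j ∈ (Finset.range (n+1)).erase i, p j := by
      apply Finset.sum_pos _ hne
      intro j hj
      exact hpos j (by have := Finset.mem_range.1 (Finset.mem_of_mem_erase hj); omega)
    linarith
  -- sum of numerators equals S - p n
  have hnum : ∑ i ∈ Finset.Icc 1 n, p (i - 1) = S - p n := by
    have h1 : ∑ i ∈ Finset.Icc 1 n, p (i - 1)
        = ∑ i ∈ Finset.range n, p ((1 + i) - 1) := by
      rw [← Finset.Ico_add_one_right_eq_Icc, Finset.sum_Ico_eq_sum_range]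
      simp
    have h2 : ∑ i ∈ Finset.range n, p ((1 + i) - 1) = ∑ i ∈ Finset.range n, p i := by
      apply Finset.sum_congr rfl
      intro i _
      congr 1
      omega
    have h3 : S = ∑ i ∈ Finset.range n, p i + p n := by
      rw [hSdef, Finset.sum_range_succ]
    rw [h1, h2]
    linarith
  have hSn : 0 < S - p n := hS n le_rfl
  have key : ∑ i ∈ Finset.Icc 1 n, p (i - 1) / (S - p n)
      < ∑ i ∈ Finset.Icc 1 n, p (i - 1) / (S - p i) := by
    apply Finset.sum_lt_sum
    · intro i hi
      obtain ⟨hi1, hin⟩ := Finset.mem_Icc.1 hi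
      have hpn : p n ≤ p i := by
        rcases eq_or_lt_of_le hin with h | h
        · rw [h]
        · exact le_of_lt (hanti i n hi1 h le_rfl)
      have : 0 < p (i - 1) := hpos (i - 1) (by omega)
      apply div_le_div_of_nonneg_left (le_of_lt this) (hS i hin)
      linarith
    · refine ⟨1, Finset.mem_Icc.2 ⟨le_rfl, by omega⟩, ?_⟩
      have hp1n : p n < p 1 := hanti 1 n le_rfl (by omega) le_rfl
      have h0 : 0 < p 0 := hpos 0 (by omega)
      have : S - p 1 < S - p n := by linarith
      simpa using div_lt_div_of_pos_left h0 (hS 1 (by omega)) this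
  have hfinal : ∑ i ∈ Finset.Icc 1 n, p (i - 1) / (S - p n) = 1 := by
    rw [← Finset.sum_div, hnum, div_self (ne_of_gt hSn)]
  linarith
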